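/- arXiv:1201.6655 — 3 statements merged into one kernel-verified Lean document; each statement's English description precedes it below -/
import Mathlib

section
/- Regret bound for Kelly markets: for every agent i with initial wealth w_i > 0, the market's cumulative log loss L satisfies L ≤ L_i + log(1/w_i), for every sequence of predictions p_{it} ∈ (0,1), market prices p_t = ∑_j w_{jt} p_{jt} ∈ (0,1), and outcomes y_t ∈ {0,1}. -/
open Finset Real

/-- Regret bound for Kelly markets: with wealths updated multiplicatively and
the market price the wealth-weighted average of predictions, the market's
cumulative log loss `L` satisfies `L ≤ L_i + log(1/w_i)` for every agent `i`. -/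
theorem kelly_market_regret_bound
    (n T : ℕ) (w : ℕ → Fin n → ℝ) (pit : Fin n → ℕ → ℝ) (pt : ℕ → ℝ)
    (y : ℕ → ℕ)
    (hw0 : ∀ i, 0 < w 0 i) (hwsum : ∑ i, w 0 i = 1)
    (hpit : ∀ i t, 0 < pit i t ∧ pit i t < 1)
    (hy : ∀ t, y t = 0 ∨ y t = 1)
    (hprice : ∀ t, pt t = ∑ j, w t j * pit j t)
    (hpt : ∀ t, 0 < pt t ∧ pt t < 1)
    (hupdate : ∀ t i, w (t + 1) i =
      w t i * (pit i t / pt t) ^ (y t) * ((1 - pit i t) / (1 - pt t)) ^ (1 - y t))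
    (i : Fin n) :
    (∑ t ∈ Finset.range T, ((y t : ℝ) * Real.log (1 / pt t) +
        (1 - (y t : ℝ)) * Real.log (1 / (1 - pt t)))) ≤
      (∑ t ∈ Finset.range T, ((y t : ℝ) * Real.log (1 / pit i t) +
        (1 - (y t : ℝ)) * Real.log (1 / (1 - pit i t)))) +
      Real.log (1 / w 0 i) := by
  have hpos : ∀ t j, 0 < w t j := by
    intro t
    induction t with
    | zero => exact hw0
    | succ t ih =>
      intro j
      rw [hupdate]
      have h1 := (hpit j t).1; have h2 := (hpit j t).2
      have h3 := (hpt t).1; have h4 := (hpt t).2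
      have h5 : 0 < 1 - pt t := by linarith
      have h6 : 0 < 1 - pit j t := by linarith
      have h7 := ih j
      positivity
  have hsum : ∀ t, ∑ j, w t j = 1 := by
    intro t
    induction t with
    | zero => exact hwsum
    | succ t ih =>
      have h3 := (hpt t).1; have h4 := (hpt t).2
      rcases hy t with h | h
      · have he : ∀ j, w (t+1) j = w t j * (1 - pit j t) / (1 - pt t) := by
          intro j; rw [hupdate, h]; ring
        rw [Finset.sum_congr rfl (fun j _ => he j), ← Finset.sum_div]
        have hs : ∑ j, w t j * (1 - pit j t) = 1 - pt t := by
          have : ∑ j, w t j * (1 - pit j t) = (∑ j, w t j) - ∑ j, w t j * pit j t := by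
            rw [← Finset.sum_sub_distrib]; ring_nf
          rw [this, ih, ← hprice t]
        rw [hs, div_self (by linarith : (1:ℝ) - pt t ≠ 0)]
      · have he : ∀ j, w (t+1) j = w t j * pit j t / pt t := by
          intro j; rw [hupdate, h]; ring
        rw [Finset.sum_congr rfl (fun j _ => he j), ← Finset.sum_div, ← hprice t]
        field_simp
  have hlog : ∀ S, Real.log (w S i) = Real.log (w 0 i) +
      ∑ t ∈ Finset.range S, ((y t : ℝ) * Real.log (pit i t / pt t) +
        (1 - (y t : ℝ)) * Real.log ((1 - pit i t) / (1 - pt t))) := by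
    intro S
    induction S with
    | zero => simp
    | succ S ih =>
      rw [Finset.sum_range_succ, ← add_assoc, ← ih]
      have h1 := (hpit i S).1; have h2 := (hpit i S).2
      have h3 := (hpt S).1; have h4 := (hpt S).2
      have hwp := hpos S i
      have h5 : 0 < 1 - pt S := by linarith
      have h6 : 0 < 1 - pit i S := by linarith
      rcases hy S with h | h
      · have he : w (S+1) i = w S i * ((1 - pit i S) / (1 - pt S)) := by
          rw [hupdate, h]; ring
        rw [he, Real.log_mul (ne_of_gt hwp) (by positivity), h]
        push_cast; ring
      · have he : w (S+1) i = w S i * (pit i S / pt S) := by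
          rw [hupdate, h]; ring
        rw [he, Real.log_mul (ne_of_gt hwp) (by positivity), h]
        push_cast; ring
  have hle : Real.log (w T i) ≤ 0 := by
    have hwT : w T i ≤ 1 := by
      have := hsum T
      have : w T i ≤ ∑ j, w T j :=
        Finset.single_le_sum (fun j _ => (hpos T j).le) (Finset.mem_univ i)
      linarith [hsum T]
    exact Real.log_nonpos (hpos T i).le hwT
  have key := hlog T
  have hterm : ∀ t, ((y t : ℝ) * Real.log (pit i t / pt t) +
        (1 - (y t : ℝ)) * Real.log ((1 - pit i t) / (1 - pt t)))
      = ((y t : ℝ) * Real.log (1 / pt t) + (1 - (y t : ℝ)) * Real.log (1 / (1 - pt t)))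
        - ((y t : ℝ) * Real.log (1 / pit i t) + (1 - (y t : ℝ)) * Real.log (1 / (1 - pit i t))) := by
    intro t
    have h1 := (hpit i t).1; have h2 := (hpit i t).2
    have h3 := (hpt t).1; have h4 := (hpt t).2
    rw [Real.log_div (ne_of_gt h1) (ne_of_gt h3),
        Real.log_div (by linarith : (1:ℝ) - pit i t ≠ 0) (by linarith : (1:ℝ) - pt t ≠ 0),
        Real.log_div one_ne_zero (ne_of_gt h3),
        Real.log_div one_ne_zero (by linarith : (1:ℝ) - pt t ≠ 0),
        Real.log_div one_ne_zero (ne_of_gt h1),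
        Real.log_div one_ne_zero (by linarith : (1:ℝ) - pit i t ≠ 0)]
    ring
  rw [Finset.sum_congr rfl (fun t _ => hterm t), Finset.sum_sub_distrib] at key
  have hlogw : Real.log (1 / w 0 i) = - Real.log (w 0 i) := by
    rw [Real.log_div one_ne_zero (ne_of_gt (hw0 i))]; simp
  rw [hlogw]
  linarith [key, hle]
end

section
/- Fractional Kelly market pricing: if each agent i plays λ_i-fractional Kelly, the market-clearing price is p_m = (∑_i λ_i w_i p_i) / (∑_i λ_i w_i); i.e., total demand ∑_i λ_i (w_i/p_m)*(p_i - p_m)/(1 - p_m) = 0 at this price. -/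
open Finset

/-- Fractional Kelly market pricing: at price
`p_m = (∑ λ_i w_i p_i)/(∑ λ_i w_i)`, total demand
`∑ λ_i (w_i/p_m) (p_i - p_m)/(1 - p_m)` is zero. -/
theorem fractional_kelly_market_clearing
    (n : ℕ) (w p lam : Fin n → ℝ)
    (hw : ∀ i, 0 < w i) (hwsum : ∑ i, w i = 1)
    (hp : ∀ i, 0 < p i ∧ p i < 1)
    (hlam : ∀ i, 0 < lam i ∧ lam i ≤ 1)
    (pm : ℝ)
    (hpm : pm = (∑ i, lam i * w i * p i) / (∑ i, lam i * w i))
    (hpm0 : 0 < pm) (hpm1 : pm < 1) :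
    ∑ i, lam i * (w i / pm) * ((p i - pm) / (1 - pm)) = 0 := by
  have hS : (∑ i, lam i * w i) ≠ 0 := by
    intro h
    rw [h, div_zero] at hpm
    exact absurd hpm0 (by rw [hpm]; exact lt_irrefl 0)
  have hkey : ∑ i, lam i * w i * (p i - pm) = 0 := by
    have : ∑ i, lam i * w i * (p i - pm)
        = (∑ i, lam i * w i * p i) - pm * (∑ i, lam i * w i) := by
      rw [Finset.mul_sum, ← Finset.sum_sub_distrib]
      congr 1; ext i; ring
    rw [this, hpm, div_mul_cancel₀ _ hS, sub_self]
  have : ∑ i, lam i * (w i / pm) * ((p i - pm) / (1 - pm))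
      = (∑ i, lam i * w i * (p i - pm)) / (pm * (1 - pm)) := by
    rw [Finset.sum_div]
    congr 1; ext i
    field_simp
    try ring
  rw [this, hkey, zero_div]
end

section
/- If agent i has the minimal log loss among all agents and equal initial wealth w_i = 1/n, then after T rounds agent i's wealth is at least 1/n, and the market log loss L satisfies L ≤ min_i L_i + log n. -/
open Finset Real

/-- With equal initial wealths `1/n`, if agent `i` has minimal log loss then its
final wealth is at least `1/n`, and the market log loss satisfies
`L ≤ L_i + log n`. -/
theorem kelly_market_min_loss_agent
    (n T : ℕ) (hn : 0 < n)
    (w : ℕ → Fin n → ℝ) (pit : Fin n → ℕ → ℝ) (pt : ℕ → ℝ) (y : ℕ → ℕ)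
    (hw0 : ∀ i, w 0 i = 1 / n)
    (hpit : ∀ i t, 0 < pit i t ∧ pit i t < 1)
    (hy : ∀ t, y t = 0 ∨ y t = 1)
    (hprice : ∀ t, pt t = ∑ j, w t j * pit j t)
    (hpt : ∀ t, 0 < pt t ∧ pt t < 1)
    (hupdate : ∀ t i, w (t + 1) i =
      w t i * (pit i t / pt t) ^ (y t) * ((1 - pit i t) / (1 - pt t)) ^ (1 - y t))
    (i : Fin n)
    (hmin : ∀ j : Fin n,
      (∑ t ∈ Finset.range T, ((y t : ℝ) * Real.log (1 / pit i t) +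
        (1 - (y t : ℝ)) * Real.log (1 / (1 - pit i t)))) ≤
      (∑ t ∈ Finset.range T, ((y t : ℝ) * Real.log (1 / pit j t) +
        (1 - (y t : ℝ)) * Real.log (1 / (1 - pit j t))))) :
    (1 / n : ℝ) ≤ w T i ∧
    (∑ t ∈ Finset.range T, ((y t : ℝ) * Real.log (1 / pt t) +
        (1 - (y t : ℝ)) * Real.log (1 / (1 - pt t)))) ≤
      (∑ t ∈ Finset.range T, ((y t : ℝ) * Real.log (1 / pit i t) +
        (1 - (y t : ℝ)) * Real.log (1 / (1 - pit i t)))) + Real.log n := by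
  have hn' : (0:ℝ) < n := by exact_mod_cast hn
  set F : Fin n → ℕ → ℝ := fun j t => (y t : ℝ) * Real.log (1 / pit j t) +
      (1 - (y t : ℝ)) * Real.log (1 / (1 - pit j t)) with hF
  set G : ℕ → ℝ := fun t => (y t : ℝ) * Real.log (1 / pt t) +
      (1 - (y t : ℝ)) * Real.log (1 / (1 - pt t)) with hG
  have hstep : ∀ t j, w (t+1) j = w t j * Real.exp (G t - F j t) := by
    intro t j
    obtain ⟨h1, h2⟩ := hpit j t
    obtain ⟨h3, h4⟩ := hpt t
    rcases hy t with h | h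
    · have he : Real.exp (G t - F j t) = (1 - pit j t) / (1 - pt t) := by
        have : G t - F j t = Real.log (1 - pit j t) - Real.log (1 - pt t) := by
          simp [hG, hF, h, one_div, Real.log_inv]; ring
        rw [this, Real.exp_sub, Real.exp_log (by linarith), Real.exp_log (by linarith)]
      rw [hupdate, h, he]; simp
    · have he : Real.exp (G t - F j t) = pit j t / pt t := by
        have : G t - F j t = Real.log (pit j t) - Real.log (pt t) := by
          simp [hG, hF, h, one_div, Real.log_inv]; ring
        rw [this, Real.exp_sub, Real.exp_log h1, Real.exp_log h3]
      rw [hupdate, h, he]; simp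
  have hform : ∀ t j, w t j = (1/n : ℝ) * Real.exp (∑ s ∈ Finset.range t, (G s - F j s)) := by
    intro t j
    induction t with
    | zero => simp [hw0]
    | succ t ih =>
        rw [hstep, ih, Finset.sum_range_succ, Real.exp_add]; ring
  have hsum : ∀ t, ∑ j, w t j = 1 := by
    intro t
    induction t with
    | zero =>
        simp [hw0]
        field_simp
    | succ t ih =>
        obtain ⟨h3, h4⟩ := hpt t
        rcases hy t with h | h
        · have : ∀ j, w (t+1) j = w t j * (1 - pit j t) / (1 - pt t) := by
            intro j; rw [hupdate, h]; simp; ring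
          simp only [this]
          rw [← Finset.sum_div]
          have : ∑ j, w t j * (1 - pit j t) = 1 - pt t := by
            rw [hprice t]
            simp [mul_sub, Finset.sum_sub_distrib, ih]
          rw [this, div_self (by linarith)]
        · have : ∀ j, w (t+1) j = w t j * pit j t / pt t := by
            intro j; rw [hupdate, h]; simp; ring
          simp only [this]
          rw [← Finset.sum_div, ← hprice t, div_self (ne_of_gt h3)]
  -- abbreviations
  have hsplit : ∀ j : Fin n, ∑ s ∈ Finset.range T, (G s - F j s)
      = (∑ s ∈ Finset.range T, G s) - ∑ s ∈ Finset.range T, F j s :=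
    fun j => Finset.sum_sub_distrib G (F j)
  set LG := ∑ s ∈ Finset.range T, G s with hLG
  have key : ∑ j, Real.exp (LG - ∑ s ∈ Finset.range T, F j s) = n := by
    have h1 := hsum T
    have h2 : ∑ j, w T j = (1/n:ℝ) * ∑ j, Real.exp (LG - ∑ s ∈ Finset.range T, F j s) := by
      rw [Finset.mul_sum]
      refine Finset.sum_congr rfl fun j _ => ?_
      rw [hform T j, hsplit j]
    rw [h2] at h1
    field_simp at h1
    linarith
  have hile : ∀ j : Fin n, Real.exp (LG - ∑ s ∈ Finset.range T, F j s)
      ≤ Real.exp (LG - ∑ s ∈ Finset.range T, F i s) := by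
    intro j
    apply Real.exp_le_exp.mpr
    have := hmin j
    simp only [hF] at this ⊢
    linarith
  constructor
  · have hge : (n:ℝ) ≤ n * Real.exp (LG - ∑ s ∈ Finset.range T, F i s) := by
      calc (n:ℝ) = ∑ j, Real.exp (LG - ∑ s ∈ Finset.range T, F j s) := key.symm
        _ ≤ ∑ _j : Fin n, Real.exp (LG - ∑ s ∈ Finset.range T, F i s) :=
            Finset.sum_le_sum fun j _ => hile j
        _ = n * Real.exp (LG - ∑ s ∈ Finset.range T, F i s) := by
            simp [Finset.sum_const, Finset.card_univ]
    have h1le : (1:ℝ) ≤ Real.exp (LG - ∑ s ∈ Finset.range T, F i s) := by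
      nlinarith
    rw [hform T i, hsplit i]
    calc (1/n:ℝ) = (1/n) * 1 := by ring
      _ ≤ (1/n) * Real.exp (LG - ∑ s ∈ Finset.range T, F i s) := by
          apply mul_le_mul_of_nonneg_left h1le (by positivity)
  · have hle : Real.exp (LG - ∑ s ∈ Finset.range T, F i s) ≤ n := by
      calc Real.exp (LG - ∑ s ∈ Finset.range T, F i s)
          ≤ ∑ j, Real.exp (LG - ∑ s ∈ Finset.range T, F j s) :=
            Finset.single_le_sum (f := fun j => Real.exp (LG - ∑ s ∈ Finset.range T, F j s))
              (fun j _ => (Real.exp_pos _).le) (Finset.mem_univ i)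
        _ = n := key
    have := Real.log_le_log (Real.exp_pos _) hle
    rw [Real.log_exp] at this
    simp only [hF, hG] at this ⊢
    linarith
end
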